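/- Let p(x) be irreducible over F and let F_{p^t} be the n×n Frobenius block of p(x)^t. If A is an n×n matrix over F satisfying A = F_{p^t}* A F_{p^t}, then A is a Toeplitz matrix. -/

import Mathlib

open Matrix Polynomial

/-- The companion matrix of a monic polynomial `q = xⁿ + c₁xⁿ⁻¹ + ⋯ + cₙ`, as an
`n × n` matrix: `1`'s on the first subdiagonal, last column `(-cₙ, …, -c₁)ᵀ`,
and all other entries `0`. -/
def companionMatrix {F : Type*} [Field F] (n : ℕ) (q : Polynomial F) :
    Matrix (Fin n) (Fin n) F :=
  Matrix.of fun i j =>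
    if (j : ℕ) = n - 1 then -q.coeff i
    else if (i : ℕ) = (j : ℕ) + 1 then 1 else 0

/-- Let `p` be irreducible over `F` and let `F_{pᵗ}` be the `n × n`
Frobenius block (companion matrix) of `p ^ t`.  If `A = F_{pᵗ}* ⬝ A ⬝ F_{pᵗ}`
(where `M* = (M.map σ)ᵀ` is the conjugate transpose with respect to the
involution `σ`), then `A` is a Toeplitz matrix: its `(i, j)` entry depends
only on `i - j`. -/
theorem toeplitz_of_fixed_by_frobenius {F : Type*} [Field F] (hchar : (2 : F) ≠ 0)
    (σ : F →+* F) (hσ : ∀ a : F, σ (σ a) = a)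
    (p : Polynomial F) (hp : Irreducible p) (hmonic : p.Monic) (t : ℕ) (ht : 0 < t)
    (n : ℕ) (hn : n = (p ^ t).natDegree)
    (A : Matrix (Fin n) (Fin n) F)
    (hA : A = ((companionMatrix n (p ^ t)).map σ)ᵀ * A * companionMatrix n (p ^ t)) :
    ∃ α : ℤ → F, ∀ i j : Fin n, A i j = α ((i : ℤ) - (j : ℤ)) := by
  rcases Nat.eq_zero_or_pos n with h0 | h0
  · exact ⟨fun _ => 0, fun i j => absurd i.2 (by omega)⟩
  set C := companionMatrix n (p ^ t) with hC
  have ccol : ∀ (l j : Fin n) (hj : (j : ℕ) + 1 < n),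
      C l j = if l = (⟨(j : ℕ) + 1, hj⟩ : Fin n) then 1 else 0 := by
    intro l j hj
    simp only [hC, companionMatrix, of_apply]
    rw [if_neg (by omega)]
    congr 1
    rw [Fin.ext_iff]
  have key : ∀ (i j : Fin n) (hi : (i : ℕ) + 1 < n) (hj : (j : ℕ) + 1 < n),
      A i j = A ⟨(i : ℕ) + 1, hi⟩ ⟨(j : ℕ) + 1, hj⟩ := by
    intro i j hi hj
    have e := congrFun (congrFun hA i) j
    rw [e, Matrix.mul_apply]
    have : ∀ l : Fin n, (((C.map σ)ᵀ * A) i l) * C l j =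
        if l = (⟨(j : ℕ) + 1, hj⟩ : Fin n) then ((C.map σ)ᵀ * A) i l else 0 := by
      intro l
      rw [ccol l j hj]
      split_ifs <;> ring
    simp only [this, Finset.sum_ite_eq', Finset.mem_univ, if_true]
    rw [Matrix.mul_apply]
    have : ∀ k : Fin n, ((C.map σ)ᵀ) i k * A k ⟨(j : ℕ) + 1, hj⟩ =
        if k = (⟨(i : ℕ) + 1, hi⟩ : Fin n) then A k ⟨(j : ℕ) + 1, hj⟩ else 0 := by
      intro k
      simp only [transpose_apply, map_apply]
      rw [ccol k i hi]
      split_ifs <;> simp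
    simp only [this, Finset.sum_ite_eq', Finset.mem_univ, if_true]
  have shift : ∀ (k : ℕ) (i j : Fin n) (hi : (i : ℕ) + k < n) (hj : (j : ℕ) + k < n),
      A ⟨(i : ℕ) + k, hi⟩ ⟨(j : ℕ) + k, hj⟩ = A i j := by
    intro k
    induction k with
    | zero => intro i j hi hj; congr 1 <;> exact Fin.ext (by simp)
    | succ k ih =>
      intro i j hi hj
      have h1 : (i : ℕ) + k < n := by omega
      have h2 : (j : ℕ) + k < n := by omega
      have hk := key ⟨(i : ℕ) + k, h1⟩ ⟨(j : ℕ) + k, h2⟩ (by simpa [add_assoc] using hi)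
        (by simpa [add_assoc] using hj)
      rw [ih i j h1 h2] at hk
      rw [show (⟨(i : ℕ) + (k + 1), hi⟩ : Fin n)
          = ⟨((⟨(i : ℕ) + k, h1⟩ : Fin n) : ℕ) + 1, by simp; omega⟩ from Fin.ext (by simp; omega),
        show (⟨(j : ℕ) + (k + 1), hj⟩ : Fin n)
          = ⟨((⟨(j : ℕ) + k, h2⟩ : Fin n) : ℕ) + 1, by simp; omega⟩ from Fin.ext (by simp; omega)]
      exact hk.symm
  refine ⟨fun d => if h : 0 ≤ d ∧ d.toNat < n then A ⟨d.toNat, h.2⟩ ⟨0, h0⟩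
    else if h' : (-d).toNat < n then A ⟨0, h0⟩ ⟨(-d).toNat, h'⟩ else 0, ?_⟩
  intro i j
  dsimp only
  by_cases hij : (j : ℕ) ≤ (i : ℕ)
  · have hd1 : (0 : ℤ) ≤ (i : ℤ) - (j : ℤ) := by omega
    have hd2 : ((i : ℤ) - (j : ℤ)).toNat = (i : ℕ) - (j : ℕ) := by omega
    have hlt : ((i : ℤ) - (j : ℤ)).toNat < n := by have := i.2; omega
    rw [dif_pos ⟨hd1, hlt⟩]
    have hs := shift (j : ℕ) ⟨((i : ℤ) - (j : ℤ)).toNat, hlt⟩ ⟨0, h0⟩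
      (by first | (simp [hd2]; omega) | simp [hd2]) (by simp)
    rw [← hs]
    congr 1 <;> exact Fin.ext (by first | (simp [hd2]; omega) | simp [hd2])
  · have hd1 : ¬ ((0 : ℤ) ≤ (i : ℤ) - (j : ℤ)) := by omega
    have hd2 : (-((i : ℤ) - (j : ℤ))).toNat = (j : ℕ) - (i : ℕ) := by omega
    have hlt : (-((i : ℤ) - (j : ℤ))).toNat < n := by have := j.2; omega
    rw [dif_neg (by tauto), dif_pos hlt]
    have hs := shift (i : ℕ) ⟨0, h0⟩ ⟨(-((i : ℤ) - (j : ℤ))).toNat, hlt⟩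
      (by simp) (by first | (simp [hd2]; omega) | simp [hd2])
    rw [← hs]
    congr 1 <;> exact Fin.ext (by first | (simp [hd2]; omega) | simp [hd2])
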